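/- arXiv:2401.16410 — 2 statements merged into one kernel-verified Lean document; each statement's English description precedes it below -/
import Mathlib

section
/- Let T be a compact operator with singular system (λ_i, φ_i, ψ_i) where T φ_i = λ_i ψ_i (with {φ_i} orthonormal basis of (ker T)^⊥). If ρ belongs to the β-regularity space Φ_β with 0 < β ≤ 2, i.e., C² := Σ_i ⟨ρ,φ_i⟩²/λ_i^{2β} < ∞, then ‖α(αI + T*T)^{-1} ρ‖² ≤ c · α^β for some constant c depending only on C and β, for all α in (0,1]. In particular the Tikhonov approximation error ‖(αI+T*T)^{-1}T*T ρ − ρ‖² = O(α^{min(β,2)}). -/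
lemma tik_key (β α l : ℝ) (hβ₀ : 0 < β) (hβ₂ : β ≤ 2) (hα : 0 < α) (hl : 0 < l) :
    (α / (α + l ^ 2)) ^ 2 ≤ α ^ β / l ^ (2 * β) := by
  have hl2 : (0:ℝ) < l ^ 2 := by positivity
  have hden : (0:ℝ) < α + l ^ 2 := by positivity
  have hlb : (0:ℝ) < l ^ β := Real.rpow_pos_of_pos hl β
  -- first: α / (α + l²) ≤ α^(β/2) / l^β
  have key : α / (α + l ^ 2) ≤ α ^ (β/2) / l ^ β := by
    rw [div_le_div_iff₀ hden hlb]
    have h1 : α ^ (1 - β/2) * (l ^ 2) ^ (β/2) ≤ (1 - β/2) * α + (β/2) * (l ^ 2) := by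
      apply Real.geom_mean_le_arith_mean2_weighted (by linarith) (by linarith) hα.le hl2.le
        (by ring)
    have h2 : (l ^ 2 : ℝ) ^ (β/2) = l ^ β := by
      rw [← Real.rpow_natCast l 2, ← Real.rpow_mul hl.le]
      congr 1; ring
    have h3 : α = α ^ (β/2) * α ^ (1 - β/2) := by
      rw [← Real.rpow_add hα]; norm_num
    calc α * l ^ β = α ^ (β/2) * (α ^ (1 - β/2) * (l ^ 2) ^ (β/2)) := by
          rw [h2]; conv_lhs => rw [h3, mul_assoc]
      _ ≤ α ^ (β/2) * ((1 - β/2) * α + (β/2) * (l ^ 2)) := by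
          apply mul_le_mul_of_nonneg_left h1 (Real.rpow_pos_of_pos hα _).le
      _ ≤ α ^ (β/2) * (α + l ^ 2) := by
          apply mul_le_mul_of_nonneg_left _ (Real.rpow_pos_of_pos hα _).le
          nlinarith [hα, hl2]
  have hnn : (0:ℝ) ≤ α / (α + l ^ 2) := by positivity
  calc (α / (α + l ^ 2)) ^ 2 ≤ (α ^ (β/2) / l ^ β) ^ 2 := by
        exact pow_le_pow_left₀ hnn key 2
    _ = α ^ β / l ^ (2 * β) := by
        rw [div_pow, ← Real.rpow_natCast (α ^ (β/2)) 2, ← Real.rpow_mul hα.le,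
          ← Real.rpow_natCast (l ^ β) 2, ← Real.rpow_mul hl.le]
        norm_num
        rw [mul_comm β 2]

/-- Spectral form of the Tikhonov approximation error bound.  If
`ρ ∈ Φ_β` with `0 < β ≤ 2`, i.e. `C² = Σᵢ cᵢ²/λᵢ^(2β) < ∞` where `cᵢ = ⟨ρ, φᵢ⟩`, then
`‖α(αI + T*T)⁻¹ρ‖² = Σᵢ (α/(α+λᵢ²))² cᵢ² ≤ C² · α^β` for all `α ∈ (0,1]`,
i.e. the Tikhonov approximation error is `O(α^{min(β,2)})`. -/
theorem tikhonov_approximation_error_rate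
    (lam c : ℕ → ℝ) (β C : ℝ)
    (hlam : ∀ i, 0 < lam i)
    (hβ₀ : 0 < β) (hβ₂ : β ≤ 2)
    (hsum : Summable (fun i => c i ^ 2 / (lam i) ^ (2 * β)))
    (hC : ∑' i, c i ^ 2 / (lam i) ^ (2 * β) = C ^ 2) :
    ∀ α : ℝ, 0 < α → α ≤ 1 →
      ∑' i, (α / (α + (lam i) ^ 2)) ^ 2 * c i ^ 2 ≤ C ^ 2 * α ^ β := by
  intro α hα hα1
  have hterm : ∀ i, (α / (α + (lam i) ^ 2)) ^ 2 * c i ^ 2 ≤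
      α ^ β * (c i ^ 2 / (lam i) ^ (2 * β)) := by
    intro i
    have := tik_key β α (lam i) hβ₀ hβ₂ hα (hlam i)
    have hc : (0:ℝ) ≤ c i ^ 2 := sq_nonneg _
    calc (α / (α + (lam i) ^ 2)) ^ 2 * c i ^ 2
        ≤ (α ^ β / (lam i) ^ (2 * β)) * c i ^ 2 := mul_le_mul_of_nonneg_right this hc
      _ = α ^ β * (c i ^ 2 / (lam i) ^ (2 * β)) := by ring
  have hsum2 : Summable (fun i => α ^ β * (c i ^ 2 / (lam i) ^ (2 * β))) :=
    hsum.mul_left _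
  have hsumL : Summable (fun i => (α / (α + (lam i) ^ 2)) ^ 2 * c i ^ 2) := by
    apply Summable.of_nonneg_of_le (fun i => by positivity) hterm hsum2
  calc ∑' i, (α / (α + (lam i) ^ 2)) ^ 2 * c i ^ 2
      ≤ ∑' i, α ^ β * (c i ^ 2 / (lam i) ^ (2 * β)) := Summable.tsum_le_tsum hterm hsumL hsum2
    _ = α ^ β * C ^ 2 := by rw [tsum_mul_left, hC]
    _ = C ^ 2 * α ^ β := mul_comm _ _
end

section
/- Let w : [0,1] → ℝ be k-times continuously differentiable and K_h a generalized kernel of order γ = min(k, ℓ), meaning ∫ K_h(hu, v+hu) du = 1, ∫ u^j K_h(hu, v+hu) du = 0 for 1 ≤ j ≤ γ−1, and ∫ |u|^γ |K_h(hu, v+hu)| du ≤ C uniformly in v and h. Then sup_{v∈[0,1]} | w(v) − ∫_{[−v/h, (1−v)/h]} K_h(hu, v+hu) w(v+hu) du | ≤ C' h^γ for a constant C' depending on sup |w^{(γ)}| and C. -/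
open MeasureTheory

lemma my_iteratedDerivWithin_eq {n m : ℕ} (hmn : m ≤ n) {f : ℝ → ℝ}
    (hf : ContDiff ℝ (n : ℕ∞) f) {s : Set ℝ} (hs : UniqueDiffOn ℝ s) {x : ℝ} (hx : x ∈ s) :
    iteratedDerivWithin m f s x = iteratedDeriv m f x := by
  have h1 : HasFTaylorSeriesUpToOn (n : ℕ∞) f (ftaylorSeries ℝ f) s :=
    (contDiff_iff_ftaylorSeries.mp hf).hasFTaylorSeriesUpToOn s
  have h2 := h1.eq_iteratedFDerivWithin_of_uniqueDiffOn (m := m) (by exact_mod_cast hmn) hs hx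
  rw [iteratedDerivWithin_eq_iteratedFDerivWithin, iteratedDeriv_eq_iteratedFDeriv, ← h2]
  rfl

lemma my_taylor_bound_right (n : ℕ) (f : ℝ → ℝ) (hf : ContDiff ℝ ((n + 1 : ℕ) : ℕ∞) f)
    (D : ℝ) (hD : ∀ t, |iteratedDeriv (n + 1) f t| ≤ D) {a x : ℝ} (hax : a ≤ x) :
    |f x - ∑ j ∈ Finset.range (n + 1), iteratedDeriv j f a * (x - a) ^ j / (Nat.factorial j : ℝ)|
      ≤ D * (x - a) ^ (n + 1) / (Nat.factorial n : ℝ) := by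
  rcases eq_or_lt_of_le hax with rfl | hlt
  · have hsum : ∑ j ∈ Finset.range (n + 1), iteratedDeriv j f a * (a - a) ^ j / (Nat.factorial j : ℝ) = f a := by
      rw [Finset.sum_eq_single 0]
      · simp
      · intro j _ hj0
        simp [sub_self, zero_pow hj0]
      · intro h0; exact absurd (Finset.mem_range.2 (Nat.succ_pos n)) h0
    rw [hsum, sub_self, abs_zero, sub_self, zero_pow (Nat.succ_ne_zero n)]
    simp
  · have hu : UniqueDiffOn ℝ (Set.Icc a x) := uniqueDiffOn_Icc hlt
    have hC : ∀ y ∈ Set.Icc a x, ‖iteratedDerivWithin (n + 1) f (Set.Icc a x) y‖ ≤ D := by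
      intro y hy
      rw [my_iteratedDerivWithin_eq le_rfl hf hu hy, Real.norm_eq_abs]
      exact hD y
    have hbd := taylor_mean_remainder_bound (f := f) hax hf.contDiffOn
      (Set.right_mem_Icc.2 hax) hC
    rw [taylor_within_apply] at hbd
    have hsum : ∑ k ∈ Finset.range (n + 1),
        (((Nat.factorial k : ℝ))⁻¹ * (x - a) ^ k) • iteratedDerivWithin k f (Set.Icc a x) a
        = ∑ j ∈ Finset.range (n + 1), iteratedDeriv j f a * (x - a) ^ j / (Nat.factorial j : ℝ) := by
      refine Finset.sum_congr rfl fun k hk => ?_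
      rw [my_iteratedDerivWithin_eq ((Nat.le_of_lt_succ (Finset.mem_range.1 hk)).trans
        (Nat.le_succ n)) hf hu (Set.left_mem_Icc.2 hax), smul_eq_mul]
      ring
    rw [Real.norm_eq_abs, hsum] at hbd
    exact hbd

lemma my_taylor_bound (n : ℕ) (f : ℝ → ℝ) (hf : ContDiff ℝ ((n + 1 : ℕ) : ℕ∞) f)
    (D : ℝ) (hD : ∀ t, |iteratedDeriv (n + 1) f t| ≤ D) (a x : ℝ) :
    |f x - ∑ j ∈ Finset.range (n + 1), iteratedDeriv j f a * (x - a) ^ j / (Nat.factorial j : ℝ)|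
      ≤ D * |x - a| ^ (n + 1) / (Nat.factorial n : ℝ) := by
  rcases le_total a x with hax | hxa
  · rw [abs_of_nonneg (sub_nonneg.2 hax)]
    exact my_taylor_bound_right n f hf D hD hax
  · have hgc : ContDiff ℝ ((n + 1 : ℕ) : ℕ∞) (fun t => f (-t)) := hf.comp contDiff_neg
    have hgD : ∀ t, |iteratedDeriv (n + 1) (fun t => f (-t)) t| ≤ D := by
      intro t
      rw [iteratedDeriv_comp_neg, smul_eq_mul, abs_mul, abs_pow, abs_neg, abs_one, one_pow,
        one_mul]
      exact hD (-t)
    have h2 := my_taylor_bound_right n (fun t => f (-t)) hgc D hgD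
      (a := -a) (x := -x) (by linarith)
    have hsum : ∑ j ∈ Finset.range (n + 1),
        iteratedDeriv j (fun t => f (-t)) (-a) * (-x - -a) ^ j / (Nat.factorial j : ℝ)
        = ∑ j ∈ Finset.range (n + 1), iteratedDeriv j f a * (x - a) ^ j / (Nat.factorial j : ℝ) := by
      refine Finset.sum_congr rfl fun j _ => ?_
      rw [iteratedDeriv_comp_neg, neg_neg, smul_eq_mul]
      have hpow : (-1 : ℝ) ^ j * (-x - -a) ^ j = (x - a) ^ j := by
        rw [← mul_pow]; congr 1; ring
      rw [show (-1 : ℝ) ^ j * iteratedDeriv j f a * (-x - -a) ^ j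
        = iteratedDeriv j f a * ((-1 : ℝ) ^ j * (-x - -a) ^ j) by ring, hpow]
    have habs : -x - -a = |x - a| := by
      rw [abs_of_nonpos (by linarith : x - a ≤ 0)]; ring
    simp only [neg_neg] at h2
    rw [show f x - ∑ j ∈ Finset.range (n + 1),
        iteratedDeriv j f a * (x - a) ^ j / (Nat.factorial j : ℝ)
      = f x - ∑ j ∈ Finset.range (n + 1),
        iteratedDeriv j (fun t => f (-t)) (-a) * (-x - -a) ^ j / (Nat.factorial j : ℝ) by rw [hsum],
      show |x - a| = -x - -a by rw [habs]]
    exact h2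

/-- Kernel smoothing bias bound.  If `w` is `γ`-times continuously
differentiable with `|w^{(γ)}| ≤ D` and `K_h` is a generalized kernel of order
`γ = min(k, ℓ)` (unit mass, vanishing moments of orders `1,…,γ−1`, and `γ`-th absolute
moment bounded by `C`), then
`sup_{v ∈ [0,1]} |w(v) − ∫_{[−v/h,(1−v)/h]} K_h(hu, v+hu) w(v+hu) du| ≤ C' h^γ`
with `C' = C · D` (depending only on `sup |w^{(γ)}|` and `C`). -/
theorem kernel_smoothing_bias_bound
    (k l : ℕ) (γ : ℕ) (hγdef : γ = min k l) (hγ : 1 ≤ γ)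
    (w : ℝ → ℝ) (hw : ContDiff ℝ (k : ℕ∞) w)
    (D : ℝ) (hD : ∀ t : ℝ, |iteratedDeriv γ w t| ≤ D)
    (h : ℝ) (hh : 0 < h)
    (K : ℝ → ℝ → ℝ) (C : ℝ) (hC : 0 < C)
    -- unit mass
    (hK0 : ∀ v ∈ Set.Icc (0:ℝ) 1,
      ∫ u in Set.Icc (-(v / h)) ((1 - v) / h), K (h * u) (v + h * u) = 1)
    -- vanishing moments of order 1,…,γ−1
    (hKj : ∀ v ∈ Set.Icc (0:ℝ) 1, ∀ j : ℕ, 1 ≤ j → j ≤ γ - 1 →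
      ∫ u in Set.Icc (-(v / h)) ((1 - v) / h), u ^ j * K (h * u) (v + h * u) = 0)
    -- bounded γ-th absolute moment
    (hKγ : ∀ v ∈ Set.Icc (0:ℝ) 1,
      ∫ u in Set.Icc (-(v / h)) ((1 - v) / h), |u| ^ γ * |K (h * u) (v + h * u)| ≤ C)
    -- integrability of the smoothed function and moments
    (hint : ∀ v ∈ Set.Icc (0:ℝ) 1, ∀ j : ℕ, j ≤ γ →
      IntegrableOn (fun u => u ^ j * K (h * u) (v + h * u) * w (v + h * u))
        (Set.Icc (-(v / h)) ((1 - v) / h))) :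
    ∀ v ∈ Set.Icc (0:ℝ) 1,
      |w v - ∫ u in Set.Icc (-(v / h)) ((1 - v) / h), K (h * u) (v + h * u) * w (v + h * u)|
        ≤ C * D * h ^ γ := by
  obtain ⟨n, rfl⟩ : ∃ n, γ = n + 1 := ⟨γ - 1, (Nat.succ_pred_eq_of_pos hγ).symm⟩
  have hγk : n + 1 ≤ k := hγdef ▸ min_le_left k l
  have hfw : ContDiff ℝ ((n + 1 : ℕ) : ℕ∞) w := hw.of_le (by exact_mod_cast hγk)
  have hDnn : 0 ≤ D := le_trans (abs_nonneg _) (hD 0)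
  intro v hv
  set s : Set ℝ := Set.Icc (-(v / h)) ((1 - v) / h) with hs
  -- K is integrable (else the unit-mass integral would be 0, not 1)
  have hKint : IntegrableOn (fun u => K (h * u) (v + h * u)) s := by
    by_contra hcon
    have h0 : ∫ u in s, K (h * u) (v + h * u) = 0 := integral_undef hcon
    rw [hK0 v hv] at h0
    norm_num at h0
  -- on s, |u| ≤ 1/h
  have hM : ∀ u ∈ s, |u| ≤ 1 / h := by
    intro u hu
    obtain ⟨h1, h2⟩ := hu
    rw [abs_le]
    constructor
    · have : v / h ≤ 1 / h := by gcongr; exact hv.2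
      linarith
    · have : (1 - v) / h ≤ 1 / h := by gcongr; linarith [hv.1]
      linarith
  -- integrability of moments of K
  have hmom : ∀ j : ℕ, IntegrableOn (fun u => u ^ j * K (h * u) (v + h * u)) s := by
    intro j
    refine Integrable.bdd_mul (c := (1 / h) ^ j) hKint
      ((continuous_pow j).aestronglyMeasurable) ?_
    filter_upwards [self_mem_ae_restrict (measurableSet_Icc : MeasurableSet s)] with u hu
    rw [Real.norm_eq_abs, abs_pow]
    exact pow_le_pow_left₀ (abs_nonneg u) (hM u hu) j
  have habsmom : IntegrableOn (fun u => |u| ^ (n + 1) * |K (h * u) (v + h * u)|) s := by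
    have := (hmom (n + 1)).abs
    simp only [abs_mul, abs_pow] at this
    exact this
  -- integrability of K · w
  have hKw : IntegrableOn (fun u => K (h * u) (v + h * u) * w (v + h * u)) s := by
    simpa using hint v hv 0 (Nat.zero_le _)
  -- Taylor polynomial
  set P : ℝ → ℝ := fun u => ∑ j ∈ Finset.range (n + 1),
    iteratedDeriv j w v * (h * u) ^ j / (Nat.factorial j : ℝ) with hP
  have hKPfun : (fun u => K (h * u) (v + h * u) * P u)
      = fun u => ∑ j ∈ Finset.range (n + 1),
        (iteratedDeriv j w v * h ^ j / (Nat.factorial j : ℝ)) * (u ^ j * K (h * u) (v + h * u)) := by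
    funext u
    rw [hP, Finset.mul_sum]
    refine Finset.sum_congr rfl fun j _ => ?_
    rw [mul_pow]
    ring
  have hKP : IntegrableOn (fun u => K (h * u) (v + h * u) * P u) s := by
    rw [hKPfun]
    exact integrable_finset_sum _ (fun j _ => ((hmom j).const_mul _))
  -- ∫ K·P = w v
  have hintP : ∫ u in s, K (h * u) (v + h * u) * P u = w v := by
    calc ∫ u in s, K (h * u) (v + h * u) * P u
        = ∑ j ∈ Finset.range (n + 1), ∫ u in s,
            (iteratedDeriv j w v * h ^ j / (Nat.factorial j : ℝ)) * (u ^ j * K (h * u) (v + h * u)) := by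
          rw [hKPfun, integral_finset_sum _ (fun j _ => ((hmom j).const_mul _))]
      _ = ∑ j ∈ Finset.range (n + 1), (iteratedDeriv j w v * h ^ j / (Nat.factorial j : ℝ)) *
            ∫ u in s, u ^ j * K (h * u) (v + h * u) := by
          simp [integral_const_mul]
      _ = w v := by
          rw [Finset.sum_eq_single 0]
          · have h1 := hK0 v hv
            rw [← hs] at h1
            simp [h1]
          · intro j hjmem hj0
            have hj1 : 1 ≤ j := Nat.one_le_iff_ne_zero.2 hj0
            have hjle : j ≤ n + 1 - 1 := by
              simpa using Nat.le_of_lt_succ (Finset.mem_range.1 hjmem)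
            rw [hKj v hv j hj1 hjle, mul_zero]
          · intro h0; exact absurd (Finset.mem_range.2 (Nat.succ_pos n)) h0
  -- rewrite the bias as an integral of the Taylor remainder
  have hsplit : w v - ∫ u in s, K (h * u) (v + h * u) * w (v + h * u)
      = ∫ u in s, K (h * u) (v + h * u) * (P u - w (v + h * u)) := by
    rw [show (fun u => K (h * u) (v + h * u) * (P u - w (v + h * u)))
      = fun u => K (h * u) (v + h * u) * P u - K (h * u) (v + h * u) * w (v + h * u) by
        funext u; ring,
      integral_sub hKP hKw, hintP]
  rw [hsplit]
  -- bound the remainder integral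
  have hb : ‖∫ u in s, K (h * u) (v + h * u) * (P u - w (v + h * u))‖
      ≤ ∫ u in s, (D * h ^ (n + 1) / (Nat.factorial n : ℝ)) *
          (|u| ^ (n + 1) * |K (h * u) (v + h * u)|) := by
    refine norm_integral_le_of_norm_le (habsmom.const_mul _) ?_
    filter_upwards [self_mem_ae_restrict (measurableSet_Icc : MeasurableSet s)] with u _
    rw [Real.norm_eq_abs, abs_mul]
    have htay := my_taylor_bound n w hfw D hD v (v + h * u)
    rw [add_sub_cancel_left] at htay
    have habs1 : |P u - w (v + h * u)| ≤ D * |h * u| ^ (n + 1) / (Nat.factorial n : ℝ) := by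
      rw [abs_sub_comm]
      exact htay
    have habs2 : |h * u| ^ (n + 1) = h ^ (n + 1) * |u| ^ (n + 1) := by
      rw [abs_mul, abs_of_pos hh, mul_pow]
    calc |K (h * u) (v + h * u)| * |P u - w (v + h * u)|
        ≤ |K (h * u) (v + h * u)| * (D * (h ^ (n + 1) * |u| ^ (n + 1)) / (Nat.factorial n : ℝ)) := by
          exact mul_le_mul_of_nonneg_left (by rw [← habs2]; exact habs1) (abs_nonneg _)
      _ = (D * h ^ (n + 1) / (Nat.factorial n : ℝ)) * (|u| ^ (n + 1) * |K (h * u) (v + h * u)|) := by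
          ring
  rw [Real.norm_eq_abs] at hb
  have hfact1 : (1 : ℝ) ≤ (Nat.factorial n : ℝ) := by exact_mod_cast (Nat.factorial_pos n)
  have hcoef : 0 ≤ D * h ^ (n + 1) / (Nat.factorial n : ℝ) := by positivity
  calc |∫ u in s, K (h * u) (v + h * u) * (P u - w (v + h * u))|
      ≤ ∫ u in s, (D * h ^ (n + 1) / (Nat.factorial n : ℝ)) *
          (|u| ^ (n + 1) * |K (h * u) (v + h * u)|) := hb
    _ = (D * h ^ (n + 1) / (Nat.factorial n : ℝ)) *
          ∫ u in s, |u| ^ (n + 1) * |K (h * u) (v + h * u)| := integral_const_mul _ _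
    _ ≤ (D * h ^ (n + 1) / (Nat.factorial n : ℝ)) * C :=
          mul_le_mul_of_nonneg_left (hKγ v hv) hcoef
    _ = C * D * h ^ (n + 1) / (Nat.factorial n : ℝ) := by ring
    _ ≤ C * D * h ^ (n + 1) := div_le_self (by positivity) hfact1
end
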